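/- Let d ≥ 1, δ > 0, let μ be a finite nonnegative Borel measure on [0,δ], let x⁰ : [−δ,1] → ℝ^d be continuous with modulus of continuity ω(h) = sup{‖x⁰(a) − x⁰(b)‖ : a, b ∈ [−δ,1], |a−b| ≤ h}, and let Z : [−δ,1] → ℝ^d be continuous with sup_{s∈[−δ,1]} ‖Z(s) − x⁰(s)‖ ≤ D. Then for every integer n ≥ 1, sup_{t∈[0,1]} ‖∫₀^δ Z(⌊nt⌋/n − g_n(u)) μ(du) − ∫₀^δ x⁰(t−u) μ(du)‖ ≤ μ([0,δ]) · (D + ω(2/n)). -/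

import Mathlib

open MeasureTheory Set

/-- The modulus of continuity of `x` on `[-δ,1]` at scale `h`:
`ω(h) = sup {‖x(a) - x(b)‖ : a, b ∈ [-δ,1], |a-b| ≤ h}`. -/
noncomputable def modulusOfContinuity {d : ℕ} (x : ℝ → EuclideanSpace ℝ (Fin d))
    (δ h : ℝ) : ℝ :=
  sSup {r : ℝ | ∃ a ∈ Icc (-δ) (1:ℝ), ∃ b ∈ Icc (-δ) (1:ℝ), |a - b| ≤ h ∧ r = ‖x a - x b‖}

/-- Pathwise estimate (core of the paper's Lemma 3(ii)): if `Z` is uniformly within `D`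
of `x⁰` on `[-δ,1]`, then uniformly in `t ∈ [0,1]`, with the grid map
`g_n(u) = min(⌊nu⌋/n, ⌊nδ⌋/n)`,
`‖H_n(Z(⌊nt⌋/n - ·)) - H(x⁰(t - ·))‖ ≤ μ([0,δ]) (D + ω(2/n))`. -/
theorem delay_functional_pathwise_estimate_discretized
    (d : ℕ) (hd : 1 ≤ d) (δ : ℝ) (hδ : 0 < δ)
    (μ : Measure ℝ) [IsFiniteMeasure μ]
    (x0 : ℝ → EuclideanSpace ℝ (Fin d)) (hx0 : ContinuousOn x0 (Icc (-δ) 1))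
    (Z : ℝ → EuclideanSpace ℝ (Fin d)) (hZ : ContinuousOn Z (Icc (-δ) 1))
    (D : ℝ) (hD : ∀ s ∈ Icc (-δ) (1:ℝ), ‖Z s - x0 s‖ ≤ D)
    (n : ℕ) (hn : 1 ≤ n) :
    ∀ t ∈ Icc (0:ℝ) 1,
      ‖(∫ u in Icc (0:ℝ) δ,
            Z ((⌊(n:ℝ) * t⌋₊ : ℝ) / n
              - min ((⌊(n:ℝ) * u⌋₊ : ℝ) / n) ((⌊(n:ℝ) * δ⌋₊ : ℝ) / n)) ∂μ)
          - ∫ u in Icc (0:ℝ) δ, x0 (t - u) ∂μ‖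
        ≤ (μ (Icc (0:ℝ) δ)).toReal * (D + modulusOfContinuity x0 δ (2 / n)) := by
  intro t ht
  obtain ⟨ht0, ht1⟩ := ht
  have hn0 : (0:ℝ) < n := by exact_mod_cast hn
  have hδ1 : -δ ≤ (1:ℝ) := by linarith
  -- basic grid estimates
  have key : ∀ s : ℝ, 0 ≤ s → s - 1/n ≤ (⌊(n:ℝ)*s⌋₊:ℝ)/n ∧ (⌊(n:ℝ)*s⌋₊:ℝ)/n ≤ s := by
    intro s hs
    have h1 : (⌊(n:ℝ)*s⌋₊:ℝ) ≤ (n:ℝ)*s := Nat.floor_le (by positivity)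
    have h2 : (n:ℝ)*s < (⌊(n:ℝ)*s⌋₊:ℝ) + 1 := Nat.lt_floor_add_one _
    have hne : (n:ℝ) ≠ 0 := ne_of_gt hn0
    constructor
    · rw [sub_le_iff_le_add, ← sub_le_iff_le_add', le_div_iff₀ hn0, sub_mul,
        div_mul_cancel₀ _ hne]
      linarith [mul_comm (n:ℝ) s]
    · rw [div_le_iff₀ hn0]
      linarith [mul_comm (n:ℝ) s]
  -- clamp to the interval
  set clamp : ℝ → ℝ := fun s => max (-δ) (min 1 s) with hclamp
  have hclampc : Continuous clamp := by fun_prop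
  have hclampmem : ∀ s, clamp s ∈ Icc (-δ) (1:ℝ) := by
    intro s
    exact ⟨le_max_left _ _, max_le hδ1 (min_le_left _ _)⟩
  have hclampid : ∀ s ∈ Icc (-δ) (1:ℝ), clamp s = s := by
    rintro s ⟨h1, h2⟩
    simp [hclamp, min_eq_right h2, max_eq_right h1]
  set Z' : ℝ → EuclideanSpace ℝ (Fin d) := fun s => Z (clamp s) with hZ'
  set x0' : ℝ → EuclideanSpace ℝ (Fin d) := fun s => x0 (clamp s) with hx0'
  have hZ'c : Continuous Z' := hZ.comp_continuous hclampc hclampmem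
  have hx0'c : Continuous x0' := hx0.comp_continuous hclampc hclampmem
  -- the grid points
  set tn : ℝ := (⌊(n:ℝ) * t⌋₊ : ℝ) / n with htn
  set g : ℝ → ℝ := fun u => min ((⌊(n:ℝ) * u⌋₊ : ℝ) / n) ((⌊(n:ℝ) * δ⌋₊ : ℝ) / n) with hg
  have htn_le : tn ≤ t := (key t ht0).2
  have htn_ge : t - 1/n ≤ tn := (key t ht0).1
  have htn_nonneg : 0 ≤ tn := by positivity
  have hg_le : ∀ u ∈ Icc (0:ℝ) δ, g u ≤ u := fun u hu =>
    le_trans (min_le_left _ _) (key u hu.1).2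
  have hg_ge : ∀ u ∈ Icc (0:ℝ) δ, u - 1/n ≤ g u := by
    rintro u ⟨hu0, huδ⟩
    exact le_min (key u hu0).1 (le_trans (by linarith) (key δ hδ.le).1)
  have hg_nonneg : ∀ u, 0 ≤ g u := fun u => le_min (by positivity) (by positivity)
  -- membership facts
  have hmem1 : ∀ u ∈ Icc (0:ℝ) δ, tn - g u ∈ Icc (-δ) (1:ℝ) := by
    rintro u hu
    have h1 := hg_le u hu
    have h2 := hg_nonneg u
    have h3 := hu.1; have h4 := hu.2
    exact ⟨by linarith, by linarith⟩
  have hmem2 : ∀ u ∈ Icc (0:ℝ) δ, t - u ∈ Icc (-δ) (1:ℝ) := by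
    rintro u ⟨hu0, huδ⟩
    exact ⟨by linarith, by linarith⟩
  have hclose : ∀ u ∈ Icc (0:ℝ) δ, |tn - g u - (t - u)| ≤ 2 / n := by
    rintro u hu
    have h1 := hg_le u hu
    have h2 := hg_ge u hu
    have h3 : (0:ℝ) < 1/n := by positivity
    have h4 : (1:ℝ)/n + 1/n = 2/n := by ring
    rw [abs_le]
    constructor <;> linarith
  -- bound on the modulus of continuity
  obtain ⟨M, hM⟩ := (isCompact_Icc : IsCompact (Icc (-δ) (1:ℝ))).exists_bound_of_continuousOn hx0
  have hbdd : BddAbove {r : ℝ | ∃ a ∈ Icc (-δ) (1:ℝ), ∃ b ∈ Icc (-δ) (1:ℝ),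
      |a - b| ≤ 2 / n ∧ r = ‖x0 a - x0 b‖} := by
    refine ⟨2 * M, ?_⟩
    rintro r ⟨a, ha, b, hb, -, rfl⟩
    calc ‖x0 a - x0 b‖ ≤ ‖x0 a‖ + ‖x0 b‖ := norm_sub_le _ _
      _ ≤ 2 * M := by linarith [hM a ha, hM b hb]
  have hω : ∀ a ∈ Icc (-δ) (1:ℝ), ∀ b ∈ Icc (-δ) (1:ℝ), |a - b| ≤ 2 / n →
      ‖x0 a - x0 b‖ ≤ modulusOfContinuity x0 δ (2 / n) := by
    intro a ha b hb hab
    exact le_csSup hbdd ⟨a, ha, b, hb, hab, rfl⟩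
  -- pointwise bound
  have hpt : ∀ u ∈ Icc (0:ℝ) δ, ‖Z' (tn - g u) - x0' (t - u)‖
      ≤ D + modulusOfContinuity x0 δ (2 / n) := by
    intro u hu
    have ha := hmem1 u hu
    have hb := hmem2 u hu
    have e1 : Z' (tn - g u) = Z (tn - g u) := by rw [hZ']; simp only [hclampid _ ha]
    have e2 : x0' (t - u) = x0 (t - u) := by rw [hx0']; simp only [hclampid _ hb]
    rw [e1, e2]
    calc ‖Z (tn - g u) - x0 (t - u)‖
        ≤ ‖Z (tn - g u) - x0 (tn - g u)‖ + ‖x0 (tn - g u) - x0 (t - u)‖ := by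
          have h := norm_add_le (Z (tn - g u) - x0 (tn - g u)) (x0 (tn - g u) - x0 (t - u))
          simpa using h
      _ ≤ D + modulusOfContinuity x0 δ (2 / n) :=
          add_le_add (hD _ ha) (hω _ ha _ hb (hclose u hu))
  -- measurability
  have hmeas : Measurable g := by
    apply Measurable.min _ measurable_const
    exact (measurable_from_top.comp
      (Nat.measurable_floor.comp (measurable_const.mul measurable_id))).div_const _
  have hmeasZ : AEStronglyMeasurable (fun u => Z' (tn - g u)) (μ.restrict (Icc 0 δ)) :=
    (hZ'c.measurable.comp (measurable_const.sub hmeas)).aestronglyMeasurable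
  have hmeasX : AEStronglyMeasurable (fun u => x0' (t - u)) (μ.restrict (Icc 0 δ)) :=
    (hx0'c.comp (continuous_const.sub continuous_id)).measurable.aestronglyMeasurable
  -- integrability
  obtain ⟨CZ, hCZ⟩ :=
    (isCompact_Icc : IsCompact (Icc (-δ) (1:ℝ))).exists_bound_of_continuousOn hZ
  have hintZ : Integrable (fun u => Z' (tn - g u)) (μ.restrict (Icc 0 δ)) := by
    refine (integrable_const CZ).mono' hmeasZ (Filter.Eventually.of_forall fun u => ?_)
    exact hCZ _ (hclampmem _)
  have hintX : Integrable (fun u => x0' (t - u)) (μ.restrict (Icc 0 δ)) := by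
    refine (integrable_const M).mono' hmeasX (Filter.Eventually.of_forall fun u => ?_)
    exact hM _ (hclampmem _)
  -- replace integrands by primed versions
  have he1 : ∫ u in Icc (0:ℝ) δ, Z (tn - g u) ∂μ = ∫ u in Icc (0:ℝ) δ, Z' (tn - g u) ∂μ := by
    refine (setIntegral_congr_fun measurableSet_Icc fun u hu => ?_).symm
    rw [hZ']; simp only [hclampid _ (hmem1 u hu)]
  have he2 : ∫ u in Icc (0:ℝ) δ, x0 (t - u) ∂μ = ∫ u in Icc (0:ℝ) δ, x0' (t - u) ∂μ := by
    refine (setIntegral_congr_fun measurableSet_Icc fun u hu => ?_).symm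
    rw [hx0']; simp only [hclampid _ (hmem2 u hu)]
  show ‖(∫ u in Icc (0:ℝ) δ, Z (tn - g u) ∂μ) - ∫ u in Icc (0:ℝ) δ, x0 (t - u) ∂μ‖ ≤ _
  rw [he1, he2, ← integral_sub hintZ hintX, mul_comm]
  exact norm_setIntegral_le_of_norm_le_const (measure_lt_top _ _)
    (fun u hu => hpt u hu)
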